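/- Fix β > 0 and K > 0, define f(z) = c_β(2βK z)/(2βK) for z ∈ ℝ, and let f*(z) = sup_{x∈ℝ} {x z − f(x)} ∈ (−∞, +∞] be its Legendre–Fenchel transform (f* is finite exactly on [−1,1]). Then: (1) sup_{z∈ℝ} {f(z) − z²/2} = sup_{z∈[−1,1]} {z²/2 − f*(z)}; (2) both suprema are attained, the first at some point of ℝ and the second at some point of the open interval (−1,1); (3) the set of global maximum points of z ↦ f(z) − z²/2 over ℝ coincides with the set of global maximum points of z ↦ z²/2 − f*(z) over [−1,1]. -/

import Mathlib

noncomputable section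

/-- `c_β(t) = log[(1 + e^{−β}(e^t + e^{−t}))/(1 + 2e^{−β})]`. -/
def cBeta (β t : ℝ) : ℝ :=
  Real.log ((1 + Real.exp (-β) * (Real.exp t + Real.exp (-t))) / (1 + 2 * Real.exp (-β)))

lemma cBeta_zero (β : ℝ) : cBeta β 0 = 0 := by
  have h : (1 + Real.exp (-β) * (Real.exp 0 + Real.exp (-0 : ℝ)))
      = 1 + 2 * Real.exp (-β) := by
    simp [Real.exp_zero]; ring
  rw [cBeta, h, div_self (by positivity), Real.log_one]

lemma cBeta_le_abs (β t : ℝ) : cBeta β t ≤ |t| := by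
  rw [cBeta, Real.log_le_iff_le_exp (by positivity), div_le_iff₀ (by positivity)]
  have h1 : Real.exp t ≤ Real.exp |t| := Real.exp_le_exp.2 (le_abs_self t)
  have h2 : Real.exp (-t) ≤ Real.exp |t| := Real.exp_le_exp.2 (neg_le_abs t)
  have h3 : 1 ≤ Real.exp |t| := Real.one_le_exp (abs_nonneg t)
  nlinarith [Real.exp_pos (-β)]

lemma abs_lt_cBeta (β t : ℝ) :
    |t| - β - Real.log (1 + 2 * Real.exp (-β)) < cBeta β t := by
  have hN : 0 < 1 + Real.exp (-β) * (Real.exp t + Real.exp (-t)) := by positivity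
  have hD : 0 < 1 + 2 * Real.exp (-β) := by positivity
  have h4 : Real.exp |t| ≤ Real.exp t + Real.exp (-t) := by
    rcases abs_cases t with ⟨h, _⟩ | ⟨h, _⟩ <;> rw [h] <;>
      nlinarith [Real.exp_pos t, Real.exp_pos (-t)]
  have key : Real.exp (|t| - β) < 1 + Real.exp (-β) * (Real.exp t + Real.exp (-t)) := by
    rw [show |t| - β = |t| + (-β) by ring, Real.exp_add]
    nlinarith [Real.exp_pos (-β), Real.exp_pos t, Real.exp_pos (-t)]
  have h5 : |t| - β < Real.log (1 + Real.exp (-β) * (Real.exp t + Real.exp (-t))) :=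
    (Real.lt_log_iff_exp_lt hN).2 key
  rw [cBeta, Real.log_div (ne_of_gt hN) (ne_of_gt hD)]
  linarith

lemma cBeta_neg (β t : ℝ) : cBeta β (-t) = cBeta β t := by
  rw [cBeta, cBeta, neg_neg, add_comm (Real.exp (-t)) (Real.exp t)]

lemma cBeta_sub_lt (β s t : ℝ) (h : s < t) : cBeta β t - t < cBeta β s - s := by
  have hNs : 0 < 1 + Real.exp (-β) * (Real.exp s + Real.exp (-s)) := by positivity
  have hNt : 0 < 1 + Real.exp (-β) * (Real.exp t + Real.exp (-t)) := by positivity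
  have hD : 0 < 1 + 2 * Real.exp (-β) := by positivity
  have e1 : Real.exp t * Real.exp (-t) = 1 := by rw [← Real.exp_add]; simp
  have e2 : Real.exp s * Real.exp (-s) = 1 := by rw [← Real.exp_add]; simp
  have h1 : Real.exp (-t) < Real.exp (-s) := Real.exp_lt_exp.2 (by linarith)
  have h2 : Real.exp (-t) * Real.exp (-t) < Real.exp (-s) * Real.exp (-s) := by
    nlinarith [Real.exp_pos (-t)]
  have key : (1 + Real.exp (-β) * (Real.exp t + Real.exp (-t))) * Real.exp (-t)
      < (1 + Real.exp (-β) * (Real.exp s + Real.exp (-s))) * Real.exp (-s) := by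
    nlinarith [Real.exp_pos (-β), mul_lt_mul_of_pos_left h2 (Real.exp_pos (-β))]
  have lkey := Real.log_lt_log (by positivity) key
  rw [Real.log_mul (ne_of_gt hNt) (Real.exp_ne_zero _),
      Real.log_mul (ne_of_gt hNs) (Real.exp_ne_zero _),
      Real.log_exp, Real.log_exp] at lkey
  rw [cBeta, cBeta, Real.log_div (ne_of_gt hNt) (ne_of_gt hD),
      Real.log_div (ne_of_gt hNs) (ne_of_gt hD)]
  linarith


/-- Derivative of `cBeta β`. -/
def cD (β t : ℝ) : ℝ :=
  Real.exp (-β) * (Real.exp t - Real.exp (-t)) /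
    (1 + Real.exp (-β) * (Real.exp t + Real.exp (-t)))

lemma hasDerivAt_cBeta (β t : ℝ) : HasDerivAt (cBeta β) (cD β t) t := by
  have hN : 0 < 1 + Real.exp (-β) * (Real.exp t + Real.exp (-t)) := by positivity
  have h1 : HasDerivAt (fun u : ℝ => Real.exp (-u)) (-Real.exp (-t)) t := by
    simpa [Function.comp_def] using (Real.hasDerivAt_exp (-t)).comp t (hasDerivAt_neg t)
  have h2 : HasDerivAt (fun u : ℝ => 1 + Real.exp (-β) * (Real.exp u + Real.exp (-u)))
      (Real.exp (-β) * (Real.exp t - Real.exp (-t))) t := by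
    have := (((Real.hasDerivAt_exp t).add h1).const_mul (Real.exp (-β))).const_add 1
    simpa [sub_eq_add_neg] using this
  have h3 := h2.log (ne_of_gt hN)
  have heq : cBeta β = fun u : ℝ =>
      Real.log (1 + Real.exp (-β) * (Real.exp u + Real.exp (-u)))
        - Real.log (1 + 2 * Real.exp (-β)) := by
    funext u
    exact Real.log_div (by positivity) (by positivity)
  rw [heq]
  exact h3.sub_const _

lemma cD_mono (β : ℝ) : Monotone (cD β) := by
  intro s t h
  have hNs : 0 < 1 + Real.exp (-β) * (Real.exp s + Real.exp (-s)) := by positivity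
  have hNt : 0 < 1 + Real.exp (-β) * (Real.exp t + Real.exp (-t)) := by positivity
  rw [cD, cD, div_le_div_iff₀ hNs hNt]
  have h1 : Real.exp s ≤ Real.exp t := Real.exp_le_exp.2 h
  have h2 : Real.exp (-t) ≤ Real.exp (-s) := Real.exp_le_exp.2 (by linarith)
  have h3 : Real.exp s * Real.exp (-t) ≤ Real.exp t * Real.exp (-s) :=
    mul_le_mul h1 h2 (Real.exp_pos _).le (Real.exp_pos _).le
  have hb := Real.exp_pos (-β)
  nlinarith [mul_le_mul_of_nonneg_left h1 hb.le, mul_le_mul_of_nonneg_left h2 hb.le,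
    mul_le_mul_of_nonneg_left h3 (mul_nonneg hb.le hb.le)]

lemma cBeta_continuous (β : ℝ) : Continuous (cBeta β) := by
  unfold cBeta
  exact Continuous.log (by fun_prop) (fun t => by positivity)

/-- With `f(z) = c_β(2βKz)/(2βK)` and `f*` its Legendre–Fenchel
transform (real-valued on `[-1,1]`, where alone it is used): (1) the two suprema
`sup_{z∈ℝ} {f(z) − z²/2}` and `sup_{z∈[-1,1]} {z²/2 − f*(z)}` are equal; (2) both are
attained, the first on `ℝ`, the second at a point of the open interval `(-1,1)`;
(3) the two sets of global maximum points coincide. -/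
theorem sup_f_eq_sup_fstar (β K : ℝ) (hβ : 0 < β) (hK : 0 < K) :
    let f : ℝ → ℝ := fun z => cBeta β (2 * β * K * z) / (2 * β * K)
    let fstar : ℝ → ℝ := fun z => ⨆ x : ℝ, (x * z - f x)
    ((⨆ z : ℝ, (f z - z ^ 2 / 2)) =
        ⨆ z : Set.Icc (-1 : ℝ) 1, ((z : ℝ) ^ 2 / 2 - fstar z)) ∧
    (∃ z : ℝ, IsMaxOn (fun z => f z - z ^ 2 / 2) Set.univ z) ∧
    (∃ z ∈ Set.Ioo (-1 : ℝ) 1,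
      IsMaxOn (fun z => z ^ 2 / 2 - fstar z) (Set.Icc (-1 : ℝ) 1) z) ∧
    {z : ℝ | IsMaxOn (fun z => f z - z ^ 2 / 2) Set.univ z} =
      {z : ℝ | z ∈ Set.Icc (-1 : ℝ) 1 ∧
        IsMaxOn (fun z => z ^ 2 / 2 - fstar z) (Set.Icc (-1 : ℝ) 1) z} := by
  intro f fstar
  have ha : (0:ℝ) < 2 * β * K := by positivity
  set C := β + Real.log (1 + 2 * Real.exp (-β)) with hC
  -- upper bound f z ≤ |z|
  have hfle : ∀ z, f z ≤ |z| := by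
    intro z
    have h1 := cBeta_le_abs β (2 * β * K * z)
    have h2 : |2 * β * K * z| = 2 * β * K * |z| := by rw [abs_mul, abs_of_pos ha]
    rw [h2] at h1
    show cBeta β (2 * β * K * z) / (2 * β * K) ≤ |z|
    rw [div_le_iff₀ ha]
    nlinarith
  -- strict lower bound f x > |x| - C/(2βK)
  have hfgt : ∀ x, |x| - C / (2 * β * K) < f x := by
    intro x
    have h1 := abs_lt_cBeta β (2 * β * K * x)
    have h2 : |2 * β * K * x| = 2 * β * K * |x| := by rw [abs_mul, abs_of_pos ha]
    rw [h2] at h1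
    show |x| - C / (2 * β * K) < cBeta β (2 * β * K * x) / (2 * β * K)
    rw [lt_div_iff₀ ha]
    have h3 : (|x| - C / (2 * β * K)) * (2 * β * K) = 2 * β * K * |x| - C := by
      field_simp
    rw [h3]
    linarith
  have hf0 : f 0 = 0 := by
    show cBeta β (2 * β * K * 0) / (2 * β * K) = 0
    rw [mul_zero, cBeta_zero, zero_div]
  -- boundedness of the Legendre family for |z| ≤ 1
  have hbdd : ∀ z : ℝ, |z| ≤ 1 → BddAbove (Set.range fun x => x * z - f x) := by
    intro z hz
    refine ⟨C / (2 * β * K), ?_⟩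
    rintro _ ⟨x, rfl⟩
    have h1 : x * z ≤ |x| := by
      calc x * z ≤ |x * z| := le_abs_self _
        _ = |x| * |z| := abs_mul _ _
        _ ≤ |x| * 1 := mul_le_mul_of_nonneg_left hz (abs_nonneg x)
        _ = |x| := mul_one _
    have h2 := hfgt x
    simp only []
    linarith
  have hfstar_ge : ∀ z : ℝ, |z| ≤ 1 → z * z - f z ≤ fstar z := by
    intro z hz
    exact le_ciSup (hbdd z hz) z
  have hφle : ∀ z : ℝ, |z| ≤ 1 → z ^ 2 / 2 - fstar z ≤ f z - z ^ 2 / 2 := by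
    intro z hz
    have h1 := hfstar_ge z hz
    nlinarith
  -- continuity and existence of a global maximizer of h := f - sq/2
  have hcont : Continuous fun z : ℝ => f z - z ^ 2 / 2 := by
    have h1 : Continuous fun z : ℝ => cBeta β (2 * β * K * z) / (2 * β * K) :=
      ((cBeta_continuous β).comp (continuous_const.mul continuous_id)).div_const _
    exact h1.sub (by fun_prop)
  obtain ⟨z₀, hz₀m, hz₀c⟩ := (isCompact_Icc (a := (-2:ℝ)) (b := 2)).exists_isMaxOn
      ⟨0, by norm_num⟩ hcont.continuousOn
  rw [isMaxOn_iff] at hz₀c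
  have hmax : IsMaxOn (fun z => f z - z ^ 2 / 2) Set.univ z₀ := by
    rw [isMaxOn_iff]
    intro w _
    by_cases hw : w ∈ Set.Icc (-2:ℝ) 2
    · exact hz₀c w hw
    · have h0 := hz₀c 0 (by norm_num)
      rw [hf0] at h0
      have hw2 : 2 < |w| := by
        simp only [Set.mem_Icc, not_and_or, not_le] at hw
        rcases hw with h | h
        · rw [abs_of_neg (by linarith)]; linarith
        · rw [abs_of_pos (by linarith)]; linarith
      have h1 := hfle w
      have hsq : |w| ^ 2 = w ^ 2 := sq_abs w
      norm_num at h0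
      show f w - w ^ 2 / 2 ≤ f z₀ - z₀ ^ 2 / 2
      nlinarith [abs_nonneg w]
  -- derivative and convexity of f
  have hfd : ∀ z : ℝ, HasDerivAt f (cD β (2 * β * K * z)) z := by
    intro z
    have hg : HasDerivAt (fun z : ℝ => 2 * β * K * z) (2 * β * K) z := by
      simpa using (hasDerivAt_id z).const_mul (2 * β * K)
    have h := ((hasDerivAt_cBeta β (2 * β * K * z)).comp z hg).div_const (2 * β * K)
    rw [mul_div_assoc, div_self (ne_of_gt ha), mul_one] at h
    exact h
  have hdiffble : Differentiable ℝ f := fun z => (hfd z).differentiableAt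
  have hmono : Monotone (deriv f) := by
    intro s t hst
    rw [(hfd s).deriv, (hfd t).deriv]
    exact cD_mono β (by nlinarith)
  have hconv : ConvexOn ℝ Set.univ f := hmono.convexOn_univ_of_deriv hdiffble
  -- tangent line at a global maximizer
  have tangent_of_max : ∀ z : ℝ, IsMaxOn (fun z => f z - z ^ 2 / 2) Set.univ z →
      ∀ x, f z + z * (x - z) ≤ f x := by
    intro z hz x
    have hloc : IsLocalMax (fun z => f z - z ^ 2 / 2) z := hz.isLocalMax Filter.univ_mem
    have hq : HasDerivAt (fun z : ℝ => z ^ 2 / 2) z z := by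
      simpa using (hasDerivAt_pow 2 z).div_const 2
    have hh := (hfd z).sub hq
    have h0 : cD β (2 * β * K * z) - z = 0 := hloc.hasDerivAt_eq_zero hh
    have hdz : cD β (2 * β * K * z) = z := by linarith
    rcases lt_trichotomy x z with hxz | hxz | hxz
    · have hs := hconv.slope_le_of_hasDerivAt (Set.mem_univ x) (Set.mem_univ z) hxz (hfd z)
      rw [slope_def_field, hdz, div_le_iff₀ (by linarith)] at hs
      nlinarith
    · subst hxz; nlinarith
    · have hs := hconv.le_slope_of_hasDerivAt (Set.mem_univ z) (Set.mem_univ x) hxz (hfd z)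
      rw [slope_def_field, hdz, le_div_iff₀ (by linarith)] at hs
      nlinarith
  -- key facts about any global maximizer
  have main : ∀ z : ℝ, IsMaxOn (fun z => f z - z ^ 2 / 2) Set.univ z →
      z ∈ Set.Ioo (-1:ℝ) 1 ∧ fstar z = z ^ 2 - f z := by
    intro z hz
    have tangent := tangent_of_max z hz
    rw [isMaxOn_iff] at hz
    have hdiff : ∀ w : ℝ, f (w + 1) - f w < 1 := by
      intro w
      have hd := cBeta_sub_lt β (2 * β * K * w) (2 * β * K * (w + 1)) (by nlinarith)
      show cBeta β (2 * β * K * (w + 1)) / (2 * β * K)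
          - cBeta β (2 * β * K * w) / (2 * β * K) < 1
      rw [div_sub_div_same, div_lt_one ha]
      nlinarith
    have hdiff' : ∀ w : ℝ, f (w - 1) - f w < 1 := by
      intro w
      have hd := cBeta_sub_lt β (-(2 * β * K * w)) (-(2 * β * K * (w - 1))) (by nlinarith)
      rw [cBeta_neg, cBeta_neg] at hd
      show cBeta β (2 * β * K * (w - 1)) / (2 * β * K)
          - cBeta β (2 * β * K * w) / (2 * β * K) < 1
      rw [div_sub_div_same, div_lt_one ha]
      nlinarith
    have hz1 : z < 1 := by
      by_contra hc
      push_neg at hc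
      have t1 := tangent (z + 1)
      have t2 := hdiff z
      nlinarith
    have hz2 : -1 < z := by
      by_contra hc
      push_neg at hc
      have t1 := tangent (z - 1)
      have t2 := hdiff' z
      nlinarith
    refine ⟨⟨hz2, hz1⟩, le_antisymm ?_ ?_⟩
    · apply ciSup_le
      intro x
      have h1 := tangent x
      nlinarith
    · have h1 := hfstar_ge z (abs_le.2 ⟨le_of_lt hz2, le_of_lt hz1⟩)
      nlinarith
  obtain ⟨hz₀I, hz₀s⟩ := main z₀ hmax
  have hz₀Icc : z₀ ∈ Set.Icc (-1:ℝ) 1 := Set.Ioo_subset_Icc_self hz₀I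
  haveI : Nonempty (Set.Icc (-1:ℝ) 1) := ⟨⟨0, by norm_num⟩⟩
  have hφz₀ : z₀ ^ 2 / 2 - fstar z₀ = f z₀ - z₀ ^ 2 / 2 := by rw [hz₀s]; ring
  have hmax' := isMaxOn_iff.mp hmax
  -- both suprema equal f z₀ - z₀²/2
  have hbddR : BddAbove (Set.range fun z : Set.Icc (-1:ℝ) 1 => (z:ℝ) ^ 2 / 2 - fstar z) := by
    refine ⟨f z₀ - z₀ ^ 2 / 2, ?_⟩
    rintro _ ⟨z, rfl⟩
    have h1 := hφle (z:ℝ) (abs_le.2 ⟨z.2.1, z.2.2⟩)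
    have h2 := hmax' (z:ℝ) (Set.mem_univ _)
    simp only [] at h2 ⊢
    linarith
  have hL : (⨆ z : ℝ, (f z - z ^ 2 / 2)) = f z₀ - z₀ ^ 2 / 2 := by
    apply le_antisymm
    · exact ciSup_le fun z => hmax' z (Set.mem_univ z)
    · exact le_ciSup ⟨f z₀ - z₀ ^ 2 / 2,
        by rintro _ ⟨z, rfl⟩; exact hmax' z (Set.mem_univ z)⟩ z₀
  have hR : (⨆ z : Set.Icc (-1:ℝ) 1, ((z:ℝ) ^ 2 / 2 - fstar z)) = f z₀ - z₀ ^ 2 / 2 := by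
    apply le_antisymm
    · apply ciSup_le
      intro z
      have h1 := hφle (z:ℝ) (abs_le.2 ⟨z.2.1, z.2.2⟩)
      have h2 := hmax' (z:ℝ) (Set.mem_univ _)
      linarith
    · calc f z₀ - z₀ ^ 2 / 2 = z₀ ^ 2 / 2 - fstar z₀ := hφz₀.symm
        _ ≤ ⨆ z : Set.Icc (-1:ℝ) 1, ((z:ℝ) ^ 2 / 2 - fstar z) :=
            le_ciSup hbddR (⟨z₀, hz₀Icc⟩ : Set.Icc (-1:ℝ) 1)
  have hmaxφ : ∀ z : ℝ, IsMaxOn (fun z => f z - z ^ 2 / 2) Set.univ z →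
      IsMaxOn (fun z => z ^ 2 / 2 - fstar z) (Set.Icc (-1:ℝ) 1) z := by
    intro z hz
    obtain ⟨hzI, hzs⟩ := main z hz
    have hz' := isMaxOn_iff.mp hz
    rw [isMaxOn_iff]
    intro w hw
    have h1 := hφle w (abs_le.2 ⟨hw.1, hw.2⟩)
    have h2 := hz' w (Set.mem_univ w)
    have h3 : z ^ 2 / 2 - fstar z = f z - z ^ 2 / 2 := by rw [hzs]; ring
    linarith
  refine ⟨hL.trans hR.symm, ⟨z₀, hmax⟩, ⟨z₀, hz₀I, hmaxφ z₀ hmax⟩, ?_⟩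
  ext z
  simp only [Set.mem_setOf_eq]
  constructor
  · intro hz
    exact ⟨Set.Ioo_subset_Icc_self (main z hz).1, hmaxφ z hz⟩
  · rintro ⟨hzIcc, hzmax⟩
    rw [isMaxOn_iff] at hzmax ⊢
    intro w _
    have h1 : z ^ 2 / 2 - fstar z ≤ f z - z ^ 2 / 2 :=
      hφle z (abs_le.2 ⟨hzIcc.1, hzIcc.2⟩)
    have h2 := hzmax z₀ hz₀Icc
    have h3 := hmax' w (Set.mem_univ w)
    linarith [hφz₀]
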